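/- arXiv:2109.09101 — 6 statements merged into one kernel-verified Lean document; each statement's English description precedes it below -/
import Mathlib

section
/- (Theorem 2, first part.) Consider a monoatomic chain with N ≥ 1 mobile atoms and fixed ends whose force function F : ℝ → ℝ is Lipschitz: functions x_0, …, x_{N+1} : ℝ → ℝ with x_0 ≡ 0, x_{N+1} ≡ 0, each x_n twice differentiable, satisfying x_n''(t) = F(x_{n+1}(t) − x_n(t)) − F(x_n(t) − x_{n−1}(t)) for 1 ≤ n ≤ N and all t. Suppose the initial data possess inversion structure: x_n(0) = −x_{N+1−n}(0) and x_n'(0) = −x_{N+1−n}'(0) for all 1 ≤ n ≤ N. Then the inversion structure is conserved for all time: x_n(t) = −x_{N+1−n}(t) for all 1 ≤ n ≤ N and all t ∈ ℝ. In particular, any inversion mode exists for an infinitely long time without transferring excitation to permutation modes. -/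
open Real

/-- Padding of a displacement vector with fixed (zero) boundary atoms. -/
private def padFun (N : ℕ) (p : Fin N → ℝ) (k : ℕ) : ℝ :=
  if h : 1 ≤ k ∧ k ≤ N then p ⟨k - 1, by omega⟩ else 0

private lemma padFun_dist_le (N : ℕ) (p p' : Fin N → ℝ) (k : ℕ) :
    dist (padFun N p k) (padFun N p' k) ≤ dist p p' := by
  unfold padFun
  split
  · exact dist_le_pi_dist p p' _
  · simp only [dist_self]; exact dist_nonneg

/-- The first-order vector field of the chain. -/
private def vf (N : ℕ) (F : ℝ → ℝ) (u : (Fin N → ℝ) × (Fin N → ℝ)) :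
    (Fin N → ℝ) × (Fin N → ℝ) :=
  (u.2, fun i => F (padFun N u.1 ((i : ℕ) + 2) - padFun N u.1 ((i : ℕ) + 1)) -
    F (padFun N u.1 ((i : ℕ) + 1) - padFun N u.1 (i : ℕ)))

private lemma vf_lipschitz (N : ℕ) (F : ℝ → ℝ) (K : NNReal) (hF : LipschitzWith K F) :
    LipschitzWith (1 + 4 * K) (vf N F) := by
  apply LipschitzWith.of_dist_le_mul
  intro u u'
  have hK : ((1 + 4 * K : NNReal) : ℝ) = 1 + 4 * (K : ℝ) := by push_cast; ring
  rw [Prod.dist_eq, hK]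
  have hd : (0:ℝ) ≤ dist u u' := dist_nonneg
  have hK0 : (0:ℝ) ≤ (K : ℝ) := K.coe_nonneg
  apply max_le
  · have : dist (vf N F u).1 (vf N F u').1 = dist u.2 u'.2 := rfl
    rw [this]
    have h2 : dist u.2 u'.2 ≤ dist u u' := by rw [Prod.dist_eq]; exact le_max_right _ _
    nlinarith
  · have h1 : dist u.1 u'.1 ≤ dist u u' := by rw [Prod.dist_eq]; exact le_max_left _ _
    refine dist_pi_le_iff (by positivity) |>.2 fun i => ?_
    show dist
      (F (padFun N u.1 ((i : ℕ) + 2) - padFun N u.1 ((i : ℕ) + 1)) -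
        F (padFun N u.1 ((i : ℕ) + 1) - padFun N u.1 (i : ℕ)))
      (F (padFun N u'.1 ((i : ℕ) + 2) - padFun N u'.1 ((i : ℕ) + 1)) -
        F (padFun N u'.1 ((i : ℕ) + 1) - padFun N u'.1 (i : ℕ))) ≤ _
    have key : ∀ a b : ℕ, dist (F (padFun N u.1 a - padFun N u.1 b))
        (F (padFun N u'.1 a - padFun N u'.1 b)) ≤ 2 * K * dist u.1 u'.1 := by
      intro a b
      calc dist (F (padFun N u.1 a - padFun N u.1 b)) (F (padFun N u'.1 a - padFun N u'.1 b))
          ≤ K * dist (padFun N u.1 a - padFun N u.1 b) (padFun N u'.1 a - padFun N u'.1 b) :=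
            hF.dist_le_mul _ _
        _ ≤ K * (dist (padFun N u.1 a) (padFun N u'.1 a)
              + dist (padFun N u.1 b) (padFun N u'.1 b)) := by
            have := dist_sub_sub_le (padFun N u.1 a) (padFun N u.1 b)
              (padFun N u'.1 a) (padFun N u'.1 b)
            nlinarith
        _ ≤ 2 * K * dist u.1 u'.1 := by
            have := padFun_dist_le N u.1 u'.1 a
            have := padFun_dist_le N u.1 u'.1 b
            nlinarith
    have hA := key ((i : ℕ) + 2) ((i : ℕ) + 1)
    have hB := key ((i : ℕ) + 1) (i : ℕ)
    have htri := dist_sub_sub_le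
      (F (padFun N u.1 ((i : ℕ) + 2) - padFun N u.1 ((i : ℕ) + 1)))
      (F (padFun N u.1 ((i : ℕ) + 1) - padFun N u.1 (i : ℕ)))
      (F (padFun N u'.1 ((i : ℕ) + 2) - padFun N u'.1 ((i : ℕ) + 1)))
      (F (padFun N u'.1 ((i : ℕ) + 1) - padFun N u'.1 (i : ℕ)))
    nlinarith

/-- (Theorem 2, first part.) For a monoatomic chain with `N` mobile atoms, fixed ends
and a Lipschitz nearest-neighbor force function, initial data with inversion structure
(`x_n(0) = −x_{N+1−n}(0)`, `x_n'(0) = −x_{N+1−n}'(0)`) keep the inversion structure for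
all time: any inversion mode exists forever without transferring excitation to
permutation modes. -/
theorem inversion_structure_is_conserved
    (N : ℕ) (hN : 1 ≤ N) (F : ℝ → ℝ) (K : NNReal) (hF : LipschitzWith K F)
    (x : ℕ → ℝ → ℝ)
    (hx0 : x 0 = 0) (hxN1 : x (N + 1) = 0)
    (hdiff : ∀ n ≤ N + 1, Differentiable ℝ (x n))
    (hdiff2 : ∀ n ≤ N + 1, Differentiable ℝ (deriv (x n)))
    (hode : ∀ n, 1 ≤ n → n ≤ N → ∀ t : ℝ,
      deriv (deriv (x n)) t = F (x (n + 1) t - x n t) - F (x n t - x (n - 1) t))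
    (hinit : ∀ n, 1 ≤ n → n ≤ N → x n 0 = -x (N + 1 - n) 0)
    (hinit' : ∀ n, 1 ≤ n → n ≤ N → deriv (x n) 0 = -deriv (x (N + 1 - n)) 0) :
    ∀ n, 1 ≤ n → n ≤ N → ∀ t : ℝ, x n t = -x (N + 1 - n) t := by
  -- the two candidate solutions of the first-order system
  set f : ℝ → (Fin N → ℝ) × (Fin N → ℝ) :=
    fun t => (fun i => x ((i : ℕ) + 1) t, fun i => deriv (x ((i : ℕ) + 1)) t) with hf_def
  set g : ℝ → (Fin N → ℝ) × (Fin N → ℝ) :=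
    fun t => (fun i => -x (N - (i : ℕ)) t, fun i => -deriv (x (N - (i : ℕ))) t) with hg_def
  -- padFun evaluated on the position parts
  have hpadf : ∀ t : ℝ, ∀ k ≤ N + 1, padFun N (f t).1 k = x k t := by
    intro t k hk
    unfold padFun
    split
    · rename_i h
      show x (k - 1 + 1) t = x k t
      congr 1
      omega
    · rename_i h
      have : k = 0 ∨ k = N + 1 := by omega
      rcases this with h0 | h0 <;> subst h0
      · rw [hx0]; rfl
      · rw [hxN1]; rfl
  have hpadg : ∀ t : ℝ, ∀ k ≤ N + 1, padFun N (g t).1 k = -x (N + 1 - k) t := by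
    intro t k hk
    unfold padFun
    split
    · rename_i h
      show -x (N - (k - 1)) t = -x (N + 1 - k) t
      congr 2
      omega
    · rename_i h
      have : k = 0 ∨ k = N + 1 := by omega
      rcases this with h0 | h0 <;> subst h0
      · simp [hxN1]
      · simp [hx0]
  -- f solves the system
  have hf' : ∀ t : ℝ, HasDerivAt f (vf N F (f t)) t := by
    intro t
    apply HasDerivAt.prodMk
    · rw [hasDerivAt_pi]
      intro i
      exact ((hdiff ((i : ℕ) + 1) (by omega)) t).hasDerivAt
    · rw [hasDerivAt_pi]
      intro i
      have h1 : (1 : ℕ) ≤ (i : ℕ) + 1 := by omega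
      have h2 : (i : ℕ) + 1 ≤ N := by omega
      have := ((hdiff2 ((i : ℕ) + 1) (by omega)) t).hasDerivAt
      convert this using 1
      show F (padFun N (f t).1 ((i : ℕ) + 2) - padFun N (f t).1 ((i : ℕ) + 1)) -
        F (padFun N (f t).1 ((i : ℕ) + 1) - padFun N (f t).1 (i : ℕ)) = _
      rw [hpadf t ((i : ℕ) + 2) (by omega), hpadf t ((i : ℕ) + 1) (by omega),
        hpadf t (i : ℕ) (by omega), hode ((i : ℕ) + 1) h1 h2 t]
      norm_num
  -- g solves the system
  have hg' : ∀ t : ℝ, HasDerivAt g (vf N F (g t)) t := by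
    intro t
    apply HasDerivAt.prodMk
    · rw [hasDerivAt_pi]
      intro i
      exact (((hdiff (N - (i : ℕ)) (by omega)) t).hasDerivAt).neg
    · rw [hasDerivAt_pi]
      intro i
      have h1 : (1 : ℕ) ≤ N - (i : ℕ) := by omega
      have h2 : N - (i : ℕ) ≤ N := by omega
      have := (((hdiff2 (N - (i : ℕ)) (by omega)) t).hasDerivAt).neg
      convert this using 1
      show F (padFun N (g t).1 ((i : ℕ) + 2) - padFun N (g t).1 ((i : ℕ) + 1)) -
        F (padFun N (g t).1 ((i : ℕ) + 1) - padFun N (g t).1 (i : ℕ)) = _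
      rw [hpadg t ((i : ℕ) + 2) (by omega), hpadg t ((i : ℕ) + 1) (by omega),
        hpadg t (i : ℕ) (by omega), hode (N - (i : ℕ)) h1 h2 t]
      have e1 : N + 1 - ((i : ℕ) + 2) = N - (i : ℕ) - 1 := by omega
      have e2 : N + 1 - ((i : ℕ) + 1) = N - (i : ℕ) := by omega
      have e3 : N + 1 - (i : ℕ) = N - (i : ℕ) + 1 := by omega
      rw [e1, e2, e3]
      ring
      rfl
  -- same initial data
  have heq0 : f 0 = g 0 := by
    rw [hf_def, hg_def]
    refine Prod.ext (funext fun i => ?_) (funext fun i => ?_)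
    · have := hinit ((i : ℕ) + 1) (by omega) (by omega)
      have e : N + 1 - ((i : ℕ) + 1) = N - (i : ℕ) := by omega
      rw [e] at this
      exact this
    · have := hinit' ((i : ℕ) + 1) (by omega) (by omega)
      have e : N + 1 - ((i : ℕ) + 1) = N - (i : ℕ) := by omega
      rw [e] at this
      exact this
  -- uniqueness
  have hmain : ∀ t : ℝ, f t = g t := by
    intro t
    have ht : t ∈ Set.Icc (-(|t| + 1)) (|t| + 1) := by
      constructor
      · have := abs_nonneg t; have := neg_abs_le t; linarith
      · have := le_abs_self t; linarith
    have h0 : (0 : ℝ) ∈ Set.Ioo (-(|t| + 1)) (|t| + 1) := by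
      constructor <;> [skip; skip] <;> have := abs_nonneg t <;> linarith
    have := ODE_solution_unique_of_mem_Icc (v := fun _ u => vf N F u)
      (s := fun _ => Set.univ) (K := 1 + 4 * K)
      (fun _ _ => (vf_lipschitz N F K hF).lipschitzOnWith) h0
      (fun s _ => (hf' s).continuousAt.continuousWithinAt)
      (fun s _ => hf' s) (fun _ _ => Set.mem_univ _)
      (fun s _ => (hg' s).continuousAt.continuousWithinAt)
      (fun s _ => hg' s) (fun _ _ => Set.mem_univ _) heq0
    exact this ht
  -- read off the conclusion
  intro n h1 h2 t
  have := congrArg (fun u => u.1 ⟨n - 1, by omega⟩) (hmain t)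
  simp only [hf_def, hg_def] at this
  have e1 : n - 1 + 1 = n := by omega
  have e2 : N - (n - 1) = N + 1 - n := by omega
  rw [e1, e2] at this
  exact this
end

section
/- Consider a monoatomic chain with an odd number N = 2m−1 (m ≥ 1) of mobile atoms and fixed ends whose force function F : ℝ → ℝ is Lipschitz: functions x_0, …, x_{N+1} : ℝ → ℝ with x_0 ≡ 0, x_{N+1} ≡ 0, each x_n twice differentiable, satisfying x_n''(t) = F(x_{n+1}(t) − x_n(t)) − F(x_n(t) − x_{n−1}(t)) for 1 ≤ n ≤ N and all t. If the initial data possess inversion structure (x_n(0) = −x_{N+1−n}(0) and x_n'(0) = −x_{N+1−n}'(0) for all 1 ≤ n ≤ N), then the central atom remains immobile for all time: x_m(t) = 0 for all t ∈ ℝ. -/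
open Real

/-- extension of a configuration `u : Fin N → ℝ` to all atom indices, with fixed ends. -/
def chainExt (N : ℕ) (u : Fin N → ℝ) (n : ℕ) : ℝ :=
  if h : 1 ≤ n ∧ n ≤ N then u ⟨n - 1, by omega⟩ else 0

/-- force on atom `i+1` (in Fin indexing). -/
def chainForce (F : ℝ → ℝ) (N : ℕ) (u : Fin N → ℝ) : Fin N → ℝ :=
  fun i => F (chainExt N u ((i : ℕ) + 2) - chainExt N u ((i : ℕ) + 1))
    - F (chainExt N u ((i : ℕ) + 1) - chainExt N u (i : ℕ))

def chainField (F : ℝ → ℝ) (N : ℕ) (p : (Fin N → ℝ) × (Fin N → ℝ)) :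
    (Fin N → ℝ) × (Fin N → ℝ) := (p.2, chainForce F N p.1)

lemma chainExt_dist (N : ℕ) (u u' : Fin N → ℝ) (n : ℕ) :
    dist (chainExt N u n) (chainExt N u' n) ≤ dist u u' := by
  unfold chainExt
  split_ifs with h
  · exact dist_le_pi_dist u u' _
  · simpa using dist_nonneg

lemma chainForce_lip (F : ℝ → ℝ) (K : NNReal) (hF : LipschitzWith K F) (N : ℕ) :
    LipschitzWith (4 * K) (chainForce F N) := by
  apply LipschitzWith.of_dist_le_mul
  intro u u'
  rcases isEmpty_or_nonempty (Fin N) with h | h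
  · rw [Subsingleton.elim (chainForce F N u) (chainForce F N u'), dist_self]; positivity
  rw [dist_pi_le_iff (by positivity)]
  intro i
  unfold chainForce
  calc dist _ _ ≤ dist (F (chainExt N u ((i:ℕ)+2) - chainExt N u ((i:ℕ)+1)))
        (F (chainExt N u' ((i:ℕ)+2) - chainExt N u' ((i:ℕ)+1)))
      + dist (F (chainExt N u ((i:ℕ)+1) - chainExt N u (i:ℕ)))
        (F (chainExt N u' ((i:ℕ)+1) - chainExt N u' (i:ℕ))) := dist_sub_sub_le _ _ _ _
    _ ≤ K * dist (chainExt N u ((i:ℕ)+2) - chainExt N u ((i:ℕ)+1))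
        (chainExt N u' ((i:ℕ)+2) - chainExt N u' ((i:ℕ)+1))
      + K * dist (chainExt N u ((i:ℕ)+1) - chainExt N u (i:ℕ))
        (chainExt N u' ((i:ℕ)+1) - chainExt N u' (i:ℕ)) :=
        add_le_add (hF.dist_le_mul _ _) (hF.dist_le_mul _ _)
    _ ≤ K * (dist u u' + dist u u') + K * (dist u u' + dist u u') := by
        gcongr <;>
        exact (dist_sub_sub_le _ _ _ _).trans
          (add_le_add (chainExt_dist _ _ _ _) (chainExt_dist _ _ _ _))
    _ = (4 * K : NNReal) * dist u u' := by push_cast; ring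

lemma chainField_lip (F : ℝ → ℝ) (K : NNReal) (hF : LipschitzWith K F) (N : ℕ) :
    LipschitzWith (max 1 (4 * K * 1)) (chainField F N) :=
  LipschitzWith.prodMk (LipschitzWith.prod_snd)
    ((chainForce_lip F K hF N).comp LipschitzWith.prod_fst)

/-- For a chain with an odd number `N = 2m−1` of mobile atoms, fixed ends and a
Lipschitz force function, initial data with inversion structure keep the central
atom `m` immobile for all time. -/
theorem central_atom_immobile_of_inversion_structure
    (m : ℕ) (hm : 1 ≤ m) (N : ℕ) (hNm : N = 2 * m - 1)
    (F : ℝ → ℝ) (K : NNReal) (hF : LipschitzWith K F)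
    (x : ℕ → ℝ → ℝ)
    (hx0 : x 0 = 0) (hxN1 : x (N + 1) = 0)
    (hdiff : ∀ n ≤ N + 1, Differentiable ℝ (x n))
    (hdiff2 : ∀ n ≤ N + 1, Differentiable ℝ (deriv (x n)))
    (hode : ∀ n, 1 ≤ n → n ≤ N → ∀ t : ℝ,
      deriv (deriv (x n)) t = F (x (n + 1) t - x n t) - F (x n t - x (n - 1) t))
    (hinit : ∀ n, 1 ≤ n → n ≤ N → x n 0 = -x (N + 1 - n) 0)
    (hinit' : ∀ n, 1 ≤ n → n ≤ N → deriv (x n) 0 = -deriv (x (N + 1 - n)) 0) :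
    ∀ t : ℝ, x m t = 0 := by
  have hN1 : 1 ≤ N := by omega
  -- the two solutions of the first-order system
  set f : ℝ → (Fin N → ℝ) × (Fin N → ℝ) :=
    fun t => (fun i => x ((i : ℕ) + 1) t, fun i => deriv (x ((i : ℕ) + 1)) t) with hf_def
  set g : ℝ → (Fin N → ℝ) × (Fin N → ℝ) :=
    fun t => (fun i => -x (N - (i : ℕ)) t, fun i => -deriv (x (N - (i : ℕ))) t) with hg_def
  -- extension identities
  have hXf : ∀ t : ℝ, ∀ n ≤ N + 1, chainExt N (f t).1 n = x n t := by
    intro t n hn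
    unfold chainExt
    split_ifs with h
    · simp only [hf_def]
      congr 1
      omega
    · have hn' : n = 0 ∨ n = N + 1 := by omega
      rcases hn' with rfl | rfl
      · simp [hx0]
      · simp [hxN1]
  have hXg : ∀ t : ℝ, ∀ n ≤ N + 1, chainExt N (g t).1 n = -x (N + 1 - n) t := by
    intro t n hn
    unfold chainExt
    split_ifs with h
    · simp only [hg_def]
      congr 2
      omega
    · have : n = 0 ∨ n = N + 1 := by omega
      rcases this with rfl | rfl
      · simp [hxN1]
      · simp [hx0]
  -- f solves the ODE
  have hfd : ∀ t : ℝ, HasDerivAt f (chainField F N (f t)) t := by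
    intro t
    apply HasDerivAt.prodMk
    · rw [hasDerivAt_pi]
      intro i
      exact (hdiff _ (by omega)).differentiableAt.hasDerivAt
    · rw [hasDerivAt_pi]
      intro i
      have h1 : HasDerivAt (deriv (x ((i : ℕ) + 1)))
          (deriv (deriv (x ((i : ℕ) + 1))) t) t :=
        (hdiff2 _ (by omega)).differentiableAt.hasDerivAt
      refine h1.congr_deriv ?_
      rw [hode _ (by omega) (by omega) t]
      simp only [chainField, chainForce]
      rw [hXf t ((i : ℕ) + 2) (by omega), hXf t ((i : ℕ) + 1) (by omega),
        hXf t (i : ℕ) (by omega)]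
      have e : (i : ℕ) + 1 - 1 = (i : ℕ) := by omega
      rw [e]
  -- g solves the ODE
  have hgd : ∀ t : ℝ, HasDerivAt g (chainField F N (g t)) t := by
    intro t
    have hiN : ∀ i : Fin N, 1 ≤ N - (i : ℕ) ∧ N - (i : ℕ) ≤ N := by
      intro i; have := i.isLt; omega
    apply HasDerivAt.prodMk
    · rw [hasDerivAt_pi]
      intro i
      exact ((hdiff _ (by omega)).differentiableAt.hasDerivAt).neg
    · rw [hasDerivAt_pi]
      intro i
      have h1 : HasDerivAt (fun t => -deriv (x (N - (i : ℕ))) t)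
          (-(deriv (deriv (x (N - (i : ℕ)))) t)) t :=
        ((hdiff2 _ (by omega)).differentiableAt.hasDerivAt).neg
      refine h1.congr_deriv ?_
      rw [hode _ (hiN i).1 (hiN i).2 t]
      simp only [chainField, chainForce]
      rw [hXg t ((i : ℕ) + 2) (by have := i.isLt; omega),
        hXg t ((i : ℕ) + 1) (by have := i.isLt; omega),
        hXg t (i : ℕ) (by have := i.isLt; omega)]
      have e1 : N + 1 - ((i : ℕ) + 2) = N - (i : ℕ) - 1 := by omega
      have e2 : N + 1 - ((i : ℕ) + 1) = N - (i : ℕ) := by omega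
      have e3 : N + 1 - (i : ℕ) = N - (i : ℕ) + 1 := by have := i.isLt; omega
      rw [e1, e2, e3]
      simp only [neg_sub_neg]
      ring
  -- same initial conditions
  have h0 : f 0 = g 0 := by
    simp only [hf_def, hg_def, Prod.mk.injEq]
    constructor
    · funext i
      have e : N + 1 - ((i : ℕ) + 1) = N - (i : ℕ) := by omega
      rw [hinit ((i : ℕ) + 1) (by omega) (by have := i.isLt; omega), e]
    · funext i
      have e : N + 1 - ((i : ℕ) + 1) = N - (i : ℕ) := by omega
      rw [hinit' ((i : ℕ) + 1) (by omega) (by have := i.isLt; omega), e]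
  -- uniqueness
  have key : ∀ t : ℝ, f t = g t := by
    intro t
    have hmem : t ∈ Set.Icc (-(|t| + 1)) (|t| + 1) := by
      constructor <;> [linarith [neg_abs_le t]; linarith [le_abs_self t]]
    have h0mem : (0 : ℝ) ∈ Set.Ioo (-(|t| + 1)) (|t| + 1) := by
      constructor <;> [linarith [abs_nonneg t]; linarith [abs_nonneg t]]
    have := ODE_solution_unique_of_mem_Icc
      (v := fun _ : ℝ => chainField F N) (s := fun _ => Set.univ)
      (K := max 1 (4 * K * 1))
      (fun t _ => (chainField_lip F K hF N).lipschitzOnWith)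
      h0mem
      (fun s _ => (hfd s).continuousAt.continuousWithinAt)
      (fun s _ => hfd s) (fun _ _ => trivial)
      (fun s _ => (hgd s).continuousAt.continuousWithinAt)
      (fun s _ => hgd s) (fun _ _ => trivial) h0
    exact this hmem
  intro t
  have := congrArg (fun p => p.1 ⟨m - 1, by omega⟩) (key t)
  simp only [hf_def, hg_def] at this
  have e1 : m - 1 + 1 = m := by omega
  have e2 : N - (m - 1) = m := by omega
  rw [e1, e2] at this
  linarith
end

section
/- (Theorem 1, first part.) Consider the chain with two mobile atoms and fixed ends with a Lipschitz force function F : ℝ → ℝ: twice differentiable functions x_1, x_2 : ℝ → ℝ satisfying x_1''(t) = F(x_2(t) − x_1(t)) − F(x_1(t)) and x_2''(t) = F(−x_2(t)) − F(x_2(t) − x_1(t)) for all t. If the antisymmetric mode is excited at t = 0, i.e., x_1(0) = a, x_2(0) = −a for some a ∈ ℝ and x_1'(0) = x_2'(0) = 0, then x_2(t) = −x_1(t) for all t ∈ ℝ; consequently the symmetric-mode amplitude x_1(t) + x_2(t) is identically zero, i.e., the excitation (energy) never transfers from the antisymmetric mode to the symmetric mode, for arbitrarily large amplitude a. -/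
open Real

/-- (Theorem 1, first part.) In the chain with two mobile atoms, fixed ends and a
Lipschitz force function, exciting the antisymmetric mode `[a, −a]` (zero initial
velocities) keeps the motion antisymmetric forever: `x₂ = −x₁`, so the
symmetric-mode amplitude `x₁ + x₂` is identically zero, for arbitrarily large `a`. -/
theorem antisymmetric_mode_never_excites_symmetric_mode
    (F : ℝ → ℝ) (K : NNReal) (hF : LipschitzWith K F)
    (x₁ x₂ : ℝ → ℝ) (a : ℝ)
    (h1 : Differentiable ℝ x₁) (h1' : Differentiable ℝ (deriv x₁))
    (h2 : Differentiable ℝ x₂) (h2' : Differentiable ℝ (deriv x₂))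
    (hode1 : ∀ t : ℝ, deriv (deriv x₁) t = F (x₂ t - x₁ t) - F (x₁ t))
    (hode2 : ∀ t : ℝ, deriv (deriv x₂) t = F (-x₂ t) - F (x₂ t - x₁ t))
    (hinit1 : x₁ 0 = a) (hinit2 : x₂ 0 = -a)
    (hv1 : deriv x₁ 0 = 0) (hv2 : deriv x₂ 0 = 0) :
    ∀ t : ℝ, x₂ t = -x₁ t ∧ x₁ t + x₂ t = 0 := by
  -- vector field on ℝ⁴
  set v : ℝ × ℝ × ℝ × ℝ → ℝ × ℝ × ℝ × ℝ := fun p =>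
    (p.2.2.1, p.2.2.2, F (p.2.1 - p.1) - F p.1, F (-p.2.1) - F (p.2.1 - p.1)) with hv
  -- Lipschitz bound for v
  have hp1 : LipschitzWith 1 (fun p : ℝ × ℝ × ℝ × ℝ => p.1) := LipschitzWith.prod_fst
  have hp2 : LipschitzWith (1 * 1) (fun p : ℝ × ℝ × ℝ × ℝ => p.2.1) :=
    LipschitzWith.prod_fst.comp LipschitzWith.prod_snd
  have hp3 : LipschitzWith ((1 * 1) * 1) (fun p : ℝ × ℝ × ℝ × ℝ => p.2.2.1) :=
    (LipschitzWith.prod_fst.comp LipschitzWith.prod_snd).comp LipschitzWith.prod_snd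
  have hp4 : LipschitzWith ((1 * 1) * 1) (fun p : ℝ × ℝ × ℝ × ℝ => p.2.2.2) :=
    (LipschitzWith.prod_snd.comp LipschitzWith.prod_snd).comp LipschitzWith.prod_snd
  obtain ⟨K', hK'⟩ : ∃ K', LipschitzWith K' v := by
    refine ⟨_, hp3.prodMk (hp4.prodMk (((hF.comp (hp2.sub hp1)).sub (hF.comp hp1)).prodMk
      ((hF.comp hp2.neg).sub (hF.comp (hp2.sub hp1)))))⟩
  set f : ℝ → ℝ × ℝ × ℝ × ℝ := fun t => (x₁ t, x₂ t, deriv x₁ t, deriv x₂ t) with hfdef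
  set g : ℝ → ℝ × ℝ × ℝ × ℝ := fun t => (-x₂ t, -x₁ t, -deriv x₂ t, -deriv x₁ t) with hgdef
  have hf' : ∀ t : ℝ, HasDerivAt f (v (f t)) t := by
    intro t
    have := ((h1 t).hasDerivAt.prodMk ((h2 t).hasDerivAt.prodMk
      ((h1' t).hasDerivAt.prodMk (h2' t).hasDerivAt)))
    simpa [hfdef, hv, hode1 t, hode2 t] using this
  have hg' : ∀ t : ℝ, HasDerivAt g (v (g t)) t := by
    intro t
    have := (((h2 t).hasDerivAt.neg).prodMk (((h1 t).hasDerivAt.neg).prodMk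
      (((h2' t).hasDerivAt.neg).prodMk ((h1' t).hasDerivAt.neg))))
    have h3 : -(deriv (deriv x₂) t) = F (-x₁ t - -x₂ t) - F (-x₂ t) := by
      rw [hode2 t]; ring_nf
    have h4 : -(deriv (deriv x₁) t) = F (- -x₁ t) - F (-x₁ t - -x₂ t) := by
      rw [hode1 t]; ring_nf
    simpa [hgdef, hv, h3, h4] using this
  have heq0 : f 0 = g 0 := by
    simp [hfdef, hgdef, hinit1, hinit2, hv1, hv2]
  have key : ∀ t : ℝ, f t = g t := by
    intro t
    have ht : t ∈ Set.Ioo (-(|t| + 1)) (|t| + 1) := by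
      constructor
      · nlinarith [neg_abs_le t]
      · nlinarith [le_abs_self t]
    have h0 : (0 : ℝ) ∈ Set.Ioo (-(|t| + 1)) (|t| + 1) := by
      constructor <;> [nlinarith [abs_nonneg t]; nlinarith [abs_nonneg t]]
    exact ODE_solution_unique_of_mem_Ioo
      (v := fun _ : ℝ => v) (s := fun _ => Set.univ)
      (fun _ _ => hK'.lipschitzOnWith) h0
      (fun t' _ => ⟨hf' t', Set.mem_univ _⟩)
      (fun t' _ => ⟨hg' t', Set.mem_univ _⟩) heq0 ht
  intro t
  have h := congrArg Prod.fst (key t)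
  simp only [hfdef, hgdef] at h
  constructor
  · linarith
  · linarith
end

section
/- (Theorem 1, second part, for the FPU-α chain.) Let α ≠ 0 and F(u) = −u + αu². Let x_1, x_2 : ℝ → ℝ be twice differentiable and satisfy x_1''(t) = F(x_2(t) − x_1(t)) − F(x_1(t)) and x_2''(t) = F(−x_2(t)) − F(x_2(t) − x_1(t)) for all t, with symmetric initial data x_1(0) = x_2(0) = a ≠ 0 and x_1'(0) = x_2'(0) = 0. Then (x_1 − x_2)''(0) = −2αa² ≠ 0, and consequently for every ε > 0 there exists t with 0 < |t| < ε and x_1(t) ≠ x_2(t): the excitation transfer from the symmetric mode to the antisymmetric mode occurs already at arbitrarily small times. -/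
open Real

/-- (Theorem 1, second part, FPU-α chain.) Exciting the symmetric mode `[a, a]` of the
chain with two mobile atoms and force `F(u) = −u + αu²` gives
`(x₁ − x₂)''(0) = −2αa² ≠ 0`, so the excitation transfers to the antisymmetric mode
at arbitrarily small times. -/
theorem symmetric_mode_excites_antisymmetric_mode_FPU_alpha
    (α : ℝ) (hα : α ≠ 0) (a : ℝ) (ha : a ≠ 0)
    (F : ℝ → ℝ) (hF : ∀ u : ℝ, F u = -u + α * u ^ 2)
    (x₁ x₂ : ℝ → ℝ)
    (h1 : Differentiable ℝ x₁) (h1' : Differentiable ℝ (deriv x₁))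
    (h2 : Differentiable ℝ x₂) (h2' : Differentiable ℝ (deriv x₂))
    (hode1 : ∀ t : ℝ, deriv (deriv x₁) t = F (x₂ t - x₁ t) - F (x₁ t))
    (hode2 : ∀ t : ℝ, deriv (deriv x₂) t = F (-x₂ t) - F (x₂ t - x₁ t))
    (hinit1 : x₁ 0 = a) (hinit2 : x₂ 0 = a)
    (hv1 : deriv x₁ 0 = 0) (hv2 : deriv x₂ 0 = 0) :
    deriv (deriv (fun t => x₁ t - x₂ t)) 0 = -2 * α * a ^ 2 ∧
    (-2 * α * a ^ 2 ≠ 0) ∧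
    ∀ ε : ℝ, 0 < ε → ∃ t : ℝ, 0 < |t| ∧ |t| < ε ∧ x₁ t ≠ x₂ t := by
  have hd : deriv (fun t => x₁ t - x₂ t) = fun t => deriv x₁ t - deriv x₂ t := by
    funext t
    exact deriv_sub (h1 t) (h2 t)
  have hdd : deriv (deriv (fun t => x₁ t - x₂ t)) 0 = -2 * α * a ^ 2 := by
    rw [hd]
    have := deriv_fun_sub (h1' 0) (h2' 0)
    rw [this, hode1 0, hode2 0, hinit1, hinit2, hF, hF, hF]
    ring
  have hne : -2 * α * a ^ 2 ≠ 0 := by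
    simp [hα, ha, sub_eq_zero]
  refine ⟨hdd, hne, ?_⟩
  intro ε hε
  by_contra h
  push_neg at h
  have heq : (fun t => x₁ t - x₂ t) =ᶠ[nhds (0 : ℝ)] (fun _ : ℝ => (0 : ℝ)) := by
    rw [Filter.EventuallyEq, Metric.eventually_nhds_iff]
    refine ⟨ε, hε, fun {t} ht => ?_⟩
    rw [Real.dist_eq, sub_zero] at ht
    by_cases h0 : t = 0
    · simp [h0, hinit1, hinit2]
    · have := h t (abs_pos.mpr h0) ht
      simp [sub_eq_zero, this]
  have heq' : deriv (fun t => x₁ t - x₂ t) =ᶠ[nhds (0 : ℝ)] deriv (fun _ => (0 : ℝ)) :=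
    heq.deriv
  have : deriv (deriv (fun t => x₁ t - x₂ t)) 0 = deriv (deriv (fun _ : ℝ => (0 : ℝ))) 0 :=
    heq'.deriv_eq
  rw [hdd] at this
  simp only [deriv_const'] at this
  exact hne this
end

section
/- (Inversion symmetry conservation in a cyclic chain.) Let M ≥ 1, let F : ℝ → ℝ be Lipschitz, and let y : ℝ → (ℤ/Mℤ → ℝ) be a solution of the cyclic chain of M particles: each y_j twice differentiable with y_j''(t) = F(y_{j+1}(t) − y_j(t)) − F(y_j(t) − y_{j−1}(t)) for all j ∈ ℤ/Mℤ and all t. Fix c ∈ ℤ/Mℤ and suppose the initial data possess inversion structure centered at c: y_j(0) = −y_{2c−j}(0) and y_j'(0) = −y_{2c−j}'(0) for all j ∈ ℤ/Mℤ. Then y_j(t) = −y_{2c−j}(t) for all j ∈ ℤ/Mℤ and all t ∈ ℝ. -/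
open Real

private lemma lipschitzWith_pi_aux {ι : Type*} [Fintype ι] {α : Type*}
    [PseudoEMetricSpace α] {β : Type*} [PseudoEMetricSpace β]
    {g : ι → α → β} {K : NNReal} (h : ∀ i, LipschitzWith K (g i)) :
    LipschitzWith K (fun x i => g i x) :=
  fun x y => edist_pi_le_iff.2 fun i => h i x y

/-- (Inversion symmetry conservation in a cyclic chain.) For a cyclic chain of `M`
particles with a Lipschitz force function, initial data with inversion structure
centered at `c` (`y_j(0) = −y_{2c−j}(0)`, `y_j'(0) = −y_{2c−j}'(0)`) keep the
inversion structure for all time. -/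
theorem cyclic_chain_inversion_symmetry_conserved
    (M : ℕ) (hM : 1 ≤ M) (F : ℝ → ℝ) (K : NNReal) (hF : LipschitzWith K F)
    (y : ZMod M → ℝ → ℝ)
    (hdiff : ∀ j : ZMod M, Differentiable ℝ (y j))
    (hdiff2 : ∀ j : ZMod M, Differentiable ℝ (deriv (y j)))
    (hode : ∀ j : ZMod M, ∀ t : ℝ,
      deriv (deriv (y j)) t = F (y (j + 1) t - y j t) - F (y j t - y (j - 1) t))
    (c : ZMod M)
    (hinit : ∀ j : ZMod M, y j 0 = -y (2 * c - j) 0)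
    (hinit' : ∀ j : ZMod M, deriv (y j) 0 = -deriv (y (2 * c - j)) 0) :
    ∀ j : ZMod M, ∀ t : ℝ, y j t = -y (2 * c - j) t := by
  haveI : NeZero M := ⟨by omega⟩
  -- state space
  set E := (ZMod M → ℝ) × (ZMod M → ℝ) with hE
  -- force on configurations
  set G : (ZMod M → ℝ) → (ZMod M → ℝ) :=
    fun u j => F (u (j + 1) - u j) - F (u j - u (j - 1)) with hG
  -- the first-order vector field
  set v : E → E := fun p => (p.2, G p.1) with hv
  have hGlip : LipschitzWith (K * 2 + K * 2) G := by
    apply lipschitzWith_pi_aux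
    intro j
    have h1 : ∀ k : ZMod M, LipschitzWith 1 (fun u : ZMod M → ℝ => u k) :=
      fun k => LipschitzWith.eval k
    have h2 : LipschitzWith (K * (1 + 1)) (fun u : ZMod M → ℝ => F (u (j + 1) - u j)) :=
      hF.comp ((h1 (j + 1)).sub (h1 j))
    have h3 : LipschitzWith (K * (1 + 1)) (fun u : ZMod M → ℝ => F (u j - u (j - 1))) :=
      hF.comp ((h1 j).sub (h1 (j - 1)))
    have := h2.sub h3
    convert this using 2 <;> norm_num <;> rfl
  have hvlip : LipschitzWith (max 1 (K * 2 + K * 2)) v := by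
    have h1 : LipschitzWith 1 (fun p : E => p.2) := LipschitzWith.prod_snd
    have h2 : LipschitzWith (K * 2 + K * 2) (fun p : E => G p.1) := by
      have := hGlip.comp (LipschitzWith.prod_fst (α := ZMod M → ℝ) (β := ZMod M → ℝ))
      rwa [mul_one] at this
    exact h1.prodMk h2
  -- the two solutions
  set f : ℝ → E := fun t => (fun j => y j t, fun j => deriv (y j) t) with hf
  set g : ℝ → E := fun t => (fun j => -y (2 * c - j) t,
    fun j => -deriv (y (2 * c - j)) t) with hg
  have hf' : ∀ t : ℝ, HasDerivAt f (v (f t)) t := by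
    intro t
    have h1 : HasDerivAt (fun t => (fun j => y j t : ZMod M → ℝ))
        (fun j => deriv (y j) t) t :=
      hasDerivAt_pi.2 fun j => (hdiff j t).hasDerivAt
    have h2 : HasDerivAt (fun t => (fun j => deriv (y j) t : ZMod M → ℝ))
        (fun j => deriv (deriv (y j)) t) t :=
      hasDerivAt_pi.2 fun j => (hdiff2 j t).hasDerivAt
    have := h1.prodMk h2
    convert this using 1
    simp only [hv, hf, hG]
    refine Prod.ext rfl ?_
    funext j
    exact (hode j t).symm
  have hg' : ∀ t : ℝ, HasDerivAt g (v (g t)) t := by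
    intro t
    have h1 : HasDerivAt (fun t => (fun j => -y (2 * c - j) t : ZMod M → ℝ))
        (fun j => -deriv (y (2 * c - j)) t) t :=
      hasDerivAt_pi.2 fun j => ((hdiff _ t).hasDerivAt).neg
    have h2 : HasDerivAt (fun t => (fun j => -deriv (y (2 * c - j)) t : ZMod M → ℝ))
        (fun j => -deriv (deriv (y (2 * c - j))) t) t :=
      hasDerivAt_pi.2 fun j => ((hdiff2 _ t).hasDerivAt).neg
    have := h1.prodMk h2
    convert this using 1
    simp only [hv, hg, hG]
    refine Prod.ext rfl ?_
    funext j
    show F (-y (2 * c - (j + 1)) t - -y (2 * c - j) t)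
        - F (-y (2 * c - j) t - -y (2 * c - (j - 1)) t)
      = -deriv (deriv (y (2 * c - j))) t
    have e1 : 2 * c - (j + 1) = (2 * c - j) - 1 := by ring
    have e2 : 2 * c - (j - 1) = (2 * c - j) + 1 := by ring
    rw [e1, e2, hode (2 * c - j) t]
    ring
  have heq0 : f 0 = g 0 := by
    refine Prod.ext ?_ ?_
    · funext j; exact hinit j
    · funext j; exact hinit' j
  -- uniqueness of ODE solutions on every interval around 0
  have key : ∀ t : ℝ, f t = g t := by
    intro t
    have hab : (0 : ℝ) ∈ Set.Ioo (-(|t| + 1)) (|t| + 1) := by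
      constructor <;> [nlinarith [abs_nonneg t]; nlinarith [abs_nonneg t]]
    have ht : t ∈ Set.Icc (-(|t| + 1)) (|t| + 1) := by
      constructor <;> [nlinarith [neg_abs_le t]; nlinarith [le_abs_self t]]
    exact ODE_solution_unique_of_mem_Icc
      (v := fun _ : ℝ => v) (s := fun _ => Set.univ)
      (fun _ _ => (hvlip).lipschitzOnWith)
      hab
      (fun s _ => (hf' s).continuousAt.continuousWithinAt)
      (fun s _ => hf' s) (fun _ _ => trivial)
      (fun s _ => (hg' s).continuousAt.continuousWithinAt)
      (fun s _ => hg' s) (fun _ _ => trivial)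
      heq0 ht
  intro j t
  have := congrFun (congrArg Prod.fst (key t)) j
  simpa [hf, hg] using this
end

section
/- (Translational symmetry conservation in a cyclic chain.) Let M ≥ 1, let F : ℝ → ℝ be Lipschitz, and let y : ℝ → (ℤ/Mℤ → ℝ) be a solution of the cyclic chain of M particles: each y_j twice differentiable with y_j''(t) = F(y_{j+1}(t) − y_j(t)) − F(y_j(t) − y_{j−1}(t)) for all j ∈ ℤ/Mℤ and all t. Fix d ∈ ℤ/Mℤ and suppose the initial data are invariant under translation by d: y_j(0) = y_{j+d}(0) and y_j'(0) = y_{j+d}'(0) for all j ∈ ℤ/Mℤ. Then y_j(t) = y_{j+d}(t) for all j ∈ ℤ/Mℤ and all t ∈ ℝ. -/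
open Real

/-- (Translational symmetry conservation in a cyclic chain.) For a cyclic chain of `M`
particles with a Lipschitz force function, initial data invariant under translation
by `d` (`y_j(0) = y_{j+d}(0)`, `y_j'(0) = y_{j+d}'(0)`) stay invariant under this
translation for all time. -/
theorem cyclic_chain_translational_symmetry_conserved
    (M : ℕ) (hM : 1 ≤ M) (F : ℝ → ℝ) (K : NNReal) (hF : LipschitzWith K F)
    (y : ZMod M → ℝ → ℝ)
    (hdiff : ∀ j : ZMod M, Differentiable ℝ (y j))
    (hdiff2 : ∀ j : ZMod M, Differentiable ℝ (deriv (y j)))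
    (hode : ∀ j : ZMod M, ∀ t : ℝ,
      deriv (deriv (y j)) t = F (y (j + 1) t - y j t) - F (y j t - y (j - 1) t))
    (d : ZMod M)
    (hinit : ∀ j : ZMod M, y j 0 = y (j + d) 0)
    (hinit' : ∀ j : ZMod M, deriv (y j) 0 = deriv (y (j + d)) 0) :
    ∀ j : ZMod M, ∀ t : ℝ, y j t = y (j + d) t := by
  haveI : NeZero M := ⟨by omega⟩
  set E := (ZMod M → ℝ) × (ZMod M → ℝ)
  set v : E → E := fun u =>
    (u.2, fun j => F (u.1 (j + 1) - u.1 j) - F (u.1 j - u.1 (j - 1))) with hv_def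
  set C : NNReal := max 1 (4 * K) with hC_def
  have hC1 : (1 : ℝ) ≤ C := by
    have := le_max_left (1 : NNReal) (4 * K)
    exact_mod_cast this
  have hCK : (4 : ℝ) * K ≤ C := by
    have := le_max_right (1 : NNReal) (4 * K)
    exact_mod_cast this
  have hv : LipschitzWith C v := by
    apply LipschitzWith.of_dist_le_mul
    intro a b
    rw [Prod.dist_eq]
    have hdab : (0 : ℝ) ≤ dist a b := dist_nonneg
    apply max_le
    · calc dist a.2 b.2 ≤ dist a b := le_max_right _ _
        _ ≤ C * dist a b := le_mul_of_one_le_left dist_nonneg hC1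
    · rw [dist_pi_le_iff (by positivity)]
      intro j
      have h1 : dist a.1 b.1 ≤ dist a b := le_max_left _ _
      have key : ∀ i : ZMod M, dist (a.1 i) (b.1 i) ≤ dist a b :=
        fun i => le_trans (dist_le_pi_dist a.1 b.1 i) h1
      calc dist (F (a.1 (j + 1) - a.1 j) - F (a.1 j - a.1 (j - 1)))
            (F (b.1 (j + 1) - b.1 j) - F (b.1 j - b.1 (j - 1)))
          ≤ dist (F (a.1 (j + 1) - a.1 j)) (F (b.1 (j + 1) - b.1 j))
            + dist (F (a.1 j - a.1 (j - 1))) (F (b.1 j - b.1 (j - 1))) :=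
            dist_sub_sub_le _ _ _ _
        _ ≤ K * dist (a.1 (j + 1) - a.1 j) (b.1 (j + 1) - b.1 j)
            + K * dist (a.1 j - a.1 (j - 1)) (b.1 j - b.1 (j - 1)) := by
            gcongr <;> exact hF.dist_le_mul _ _
        _ ≤ K * (dist (a.1 (j + 1)) (b.1 (j + 1)) + dist (a.1 j) (b.1 j))
            + K * (dist (a.1 j) (b.1 j) + dist (a.1 (j - 1)) (b.1 (j - 1))) := by
            gcongr <;> exact dist_sub_sub_le _ _ _ _
        _ ≤ K * (dist a b + dist a b) + K * (dist a b + dist a b) := by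
            gcongr <;> exact key _
        _ = 4 * K * dist a b := by ring
        _ ≤ C * dist a b := by gcongr
  set f : ℝ → E := fun t => (fun j => y j t, fun j => deriv (y j) t) with hf_def
  set g : ℝ → E := fun t => (fun j => y (j + d) t, fun j => deriv (y (j + d)) t) with hg_def
  have hfd : ∀ t, HasDerivAt f (v (f t)) t := by
    intro t
    apply HasDerivAt.prodMk
    · exact hasDerivAt_pi.mpr fun j => ((hdiff j).differentiableAt).hasDerivAt
    · refine hasDerivAt_pi.mpr fun j => ?_
      have := ((hdiff2 j).differentiableAt (x := t)).hasDerivAt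
      rwa [hode j t] at this
  have hgd : ∀ t, HasDerivAt g (v (g t)) t := by
    intro t
    apply HasDerivAt.prodMk
    · exact hasDerivAt_pi.mpr fun j => ((hdiff (j + d)).differentiableAt).hasDerivAt
    · refine hasDerivAt_pi.mpr fun j => ?_
      have := ((hdiff2 (j + d)).differentiableAt (x := t)).hasDerivAt
      rw [hode (j + d) t] at this
      have e1 : j + d + 1 = j + 1 + d := by ring
      have e2 : j + d - 1 = j - 1 + d := by ring
      rw [e1, e2] at this
      exact this
  have h0 : f 0 = g 0 := by
    ext j
    · exact hinit j
    · exact hinit' j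
  intro j t
  have htmem : t ∈ Set.Icc (-(|t| + 1)) (|t| + 1) :=
    ⟨by have := neg_abs_le t; linarith, by have := le_abs_self t; linarith⟩
  have h0mem : (0 : ℝ) ∈ Set.Ioo (-(|t| + 1)) (|t| + 1) :=
    ⟨by have := abs_nonneg t; linarith, by have := abs_nonneg t; linarith⟩
  have huniq := ODE_solution_unique_of_mem_Icc (v := fun _ : ℝ => v)
    (s := fun _ : ℝ => (Set.univ : Set E))
    (fun _ _ => hv.lipschitzOnWith) h0mem
    (fun x _ => (hfd x).continuousAt.continuousWithinAt)
    (fun x _ => hfd x) (fun _ _ => trivial)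
    (fun x _ => (hgd x).continuousAt.continuousWithinAt)
    (fun x _ => hgd x) (fun _ _ => trivial) h0
  have := huniq htmem
  exact congrFun (congrArg Prod.fst this) j
end
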